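/- If P is a Vilenkin polynomial on G_m × G_m (a finite linear combination of ψ_i ⊗ ψ_j), then for every (x,y) ∈ G_m × G_m, W_n(x,y;P) → 0 as n → ∞; i.e., every point is a Marcinkiewicz–Lebesgue point of a Vilenkin polynomial. -/

import Mathlib

open Complex Finset

noncomputable section

/-- The generalized number system: `M 0 = 1`, `M (k+1) = m k * M k`. -/
def Mf (m : ℕ → ℕ) : ℕ → ℕ
  | 0 => 1
  | k + 1 => m k * Mf m k

/-- The generalized Rademacher function `r_k(x) = exp(2πi x_k / m_k)`. -/
def rad (m : ℕ → ℕ) (k : ℕ) (x : ∀ j, ZMod (m j)) : ℂ :=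
  Complex.exp (2 * Real.pi * Complex.I * (x k).val / (m k))

/-- The Vilenkin function `ψ_n(x) = ∏ k, r_k(x)^{n_k}` where `n_k = (n / M_k) % m_k`
is the k-th digit of `n` in the generalized number system. -/
def psi (m : ℕ → ℕ) (n : ℕ) (x : ∀ j, ZMod (m j)) : ℂ :=
  ∏ k ∈ Finset.range (n + 1), rad m k x ^ ((n / Mf m k) % m k)

/-- Vilenkin Dirichlet kernel. -/
def Dker (m : ℕ → ℕ) (n : ℕ) (x : ∀ j, ZMod (m j)) : ℂ :=
  ∑ j ∈ Finset.range n, psi m j x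

/-- One-dimensional Vilenkin Fejér kernel. -/
def Fejer (m : ℕ → ℕ) (n : ℕ) (x : ∀ j, ZMod (m j)) : ℂ :=
  (n : ℂ)⁻¹ * ∑ k ∈ Finset.range n, Dker m k x

/-- Two-dimensional Marcinkiewicz–Fejér kernel. -/
def MKer (m : ℕ → ℕ) (n : ℕ) (x y : ∀ j, ZMod (m j)) : ℂ :=
  (n : ℂ)⁻¹ * ∑ k ∈ Finset.range n, Dker m k x * Dker m k y

/-- `e_s ∈ G_m`: the element whose s-th coordinate is 1 and all others are 0. -/
def evec (m : ℕ → ℕ) (s : ℕ) : ∀ j, ZMod (m j) :=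
  fun j => if j = s then 1 else 0

/-- `r_{i,n}(x,y) = ∏_{l=i}^{n} ∑_{s=0}^{m_l-1} ψ_{M_l}(x+y)^s`. -/
def rr (m : ℕ → ℕ) (i n : ℕ) (x y : ∀ j, ZMod (m j)) : ℂ :=
  ∏ l ∈ Finset.Icc i n, ∑ s ∈ Finset.range (m l), psi m (Mf m l) (x + y) ^ s

open MeasureTheory ENNReal NNReal
open scoped Classical

/-- Discrete measurable structure on `ZMod n`. -/
instance (n : ℕ) : MeasurableSpace (ZMod n) := ⊤

/-- The cylinder set `I_k(z) = {x : x_j = z_j for j < k}`. -/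
def cyl (m : ℕ → ℕ) (k : ℕ) (z : ∀ j, ZMod (m j)) : Set (∀ j, ZMod (m j)) :=
  {x | ∀ j < k, x j = z j}

variable (m : ℕ → ℕ)

/-- Marcinkiewicz–Fejér mean via convolution with the kernel:
`σ_n(x,y;f) = ∫ f(t,u) K_n(x−t, y−u) dμ(t,u)`. -/
def sigmaMF (μ : Measure ((∀ j, ZMod (m j)) × (∀ j, ZMod (m j))))
    (n : ℕ) (f : (∀ j, ZMod (m j)) × (∀ j, ZMod (m j)) → ℂ) (x y : ∀ j, ZMod (m j)) : ℂ :=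
  ∫ tu, f tu * MKer m n (x - tu.1) (y - tu.2) ∂μ

/-- The Marcinkiewicz–Lebesgue expression `W_j(x,y;f)`. -/
def Wml (μ : Measure ((∀ j, ZMod (m j)) × (∀ j, ZMod (m j))))
    (n : ℕ) (f : (∀ j, ZMod (m j)) × (∀ j, ZMod (m j)) → ℂ) (x y : ∀ j, ZMod (m j)) : ℝ :=
  (Mf m n : ℝ)⁻¹ *
      ∑ q ∈ Finset.range n, ∑ k ∈ Finset.Icc q (n - 1), ∑ v ∈ Finset.Icc 1 (m q - 1),
        (Mf m q : ℝ) * (Mf m k : ℝ) ^ 2 *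
          ∫ tu in (cyl m k 0) ×ˢ (cyl m k (v • evec m q)),
            ‖f (x - tu.1, y - tu.2) - f (x, y)‖ * ‖rr m (k + 1) (n - 1) tu.1 tu.2‖ ∂μ +
    (Mf m n : ℝ)⁻¹ *
      ∑ q ∈ Finset.range n, ∑ k ∈ Finset.Icc q (n - 1), ∑ v ∈ Finset.Icc 1 (m q - 1),
        (Mf m q : ℝ) * (Mf m k : ℝ) ^ 2 *
          ∫ tu in (cyl m k (v • evec m q)) ×ˢ (cyl m k 0),
            ‖f (x - tu.1, y - tu.2) - f (x, y)‖ * ‖rr m (k + 1) (n - 1) tu.1 tu.2‖ ∂μ +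
    (∑ s ∈ Finset.range (n + 1), ∑ i ∈ Finset.Icc s n, ∑ v ∈ Finset.Icc 1 (m s - 1),
      (Mf m s : ℝ) * (Mf m i : ℝ) *
        ∫ tu in (cyl m n 0) ×ˢ (cyl m i (v • evec m s)),
          ‖f (x - tu.1, y - tu.2) - f (x, y)‖ ∂μ) +
    ∑ s ∈ Finset.range (n + 1), ∑ i ∈ Finset.Icc s n, ∑ v ∈ Finset.Icc 1 (m s - 1),
      (Mf m s : ℝ) * (Mf m i : ℝ) *
        ∫ tu in (cyl m i (v • evec m s)) ×ˢ (cyl m n 0),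
          ‖f (x - tu.1, y - tu.2) - f (x, y)‖ ∂μ

open Filter

namespace Aux17

instance (n : ℕ) : MeasurableSingletonClass (ZMod n) :=
  ⟨fun _ => MeasurableSpace.measurableSet_top⟩

instance (n : ℕ) : Countable (ZMod n) := by
  cases n
  · exact inferInstanceAs (Countable ℤ)
  · exact inferInstanceAs (Countable (Fin _))

variable {m : ℕ → ℕ}

lemma Mf_pos (hm : ∀ k, 2 ≤ m k) (n : ℕ) : 0 < Mf m n := by
  induction n with
  | zero => simp [Mf]
  | succ k ih => have := hm k; exact Nat.mul_pos (by omega) ih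

lemma two_pow_le_Mf (hm : ∀ k, 2 ≤ m k) (n : ℕ) : 2 ^ n ≤ Mf m n := by
  induction n with
  | zero => simp [Mf]
  | succ k ih =>
    calc 2 ^ (k + 1) = 2 * 2 ^ k := by ring
    _ ≤ m k * Mf m k := Nat.mul_le_mul (hm k) ih

lemma Mf_factor {k l : ℕ} (hkl : k ≤ l) :
    Mf m l = (∏ i ∈ Finset.Ico k l, m i) * Mf m k := by
  induction l, hkl using Nat.le_induction with
  | base => simp
  | succ n hn ih =>
    rw [show Mf m (n + 1) = m n * Mf m n from rfl, ih, Finset.prod_Ico_succ_top hn]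
    ring

lemma Mf_mono (hm : ∀ k, 2 ≤ m k) {k l : ℕ} (hkl : k ≤ l) : Mf m k ≤ Mf m l := by
  rw [Mf_factor hkl]
  have : 0 < ∏ i ∈ Finset.Ico k l, m i :=
    Finset.prod_pos fun i _ => by have := hm i; omega
  nlinarith [Mf_pos hm k]

lemma Mf_strict (hm : ∀ k, 2 ≤ m k) {k l : ℕ} (hkl : k < l) : Mf m k < Mf m l := by
  rw [Mf_factor hkl.le]
  have h1 : 2 ≤ ∏ i ∈ Finset.Ico k l, m i := by
    calc 2 = 2 ^ 1 := rfl
    _ ≤ 2 ^ (l - k) := Nat.pow_le_pow_right (by norm_num) (by omega)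
    _ ≤ ∏ i ∈ Finset.Ico k l, m i := by
        rw [← Nat.card_Ico k l, ← Finset.prod_const]
        exact Finset.prod_le_prod' fun i _ => hm i
  nlinarith [Mf_pos hm k]

lemma psi_Mf (hm : ∀ k, 2 ≤ m k) (l : ℕ) (x : ∀ j, ZMod (m j)) :
    psi m (Mf m l) x = rad m l x := by
  have hl : l < Mf m l + 1 := by
    have := two_pow_le_Mf hm l
    have := Nat.lt_two_pow_self (n := l)
    omega
  rw [psi]
  rw [Finset.prod_eq_single_of_mem l (Finset.mem_range.mpr hl)]
  · rw [Nat.div_self (Mf_pos hm l), Nat.mod_eq_of_lt (by have := hm l; omega), pow_one]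
  · intro b _ hbl
    rcases Nat.lt_or_ge b l with hb | hb
    · have : Mf m l / Mf m b = ∏ i ∈ Finset.Ico b l, m i := by
        rw [Mf_factor hb.le, Nat.mul_div_cancel _ (Mf_pos hm b)]
      rw [this]
      have : m b ∣ ∏ i ∈ Finset.Ico b l, m i :=
        Finset.dvd_prod_of_mem _ (Finset.mem_Ico.mpr ⟨le_refl _, hb⟩)
      rw [Nat.mod_eq_zero_of_dvd this, pow_zero]
    · have hb' : l < b := by omega
      rw [Nat.div_eq_of_lt (Mf_strict hm hb'), Nat.zero_mod, pow_zero]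

end Aux17
namespace Aux17
variable {m : ℕ → ℕ}

lemma norm_rad (k : ℕ) (x : ∀ j, ZMod (m j)) : ‖rad m k x‖ = 1 := by
  have : (2 * Real.pi * Complex.I * ((x k).val : ℂ)) / (m k : ℂ) =
      ((2 * Real.pi * (x k).val / (m k) : ℝ) : ℂ) * Complex.I := by
    push_cast; ring
  rw [rad, this, Complex.norm_exp_ofReal_mul_I]

lemma norm_psi (n : ℕ) (x : ∀ j, ZMod (m j)) : ‖psi m n x‖ = 1 := by
  rw [psi, norm_prod]
  refine Finset.prod_eq_one fun k _ => by rw [norm_pow, norm_rad, one_pow]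

lemma psi_congr {n : ℕ} {x y : ∀ j, ZMod (m j)} (h : ∀ j ≤ n, x j = y j) :
    psi m n x = psi m n y := by
  rw [psi, psi]
  refine Finset.prod_congr rfl fun k hk => ?_
  rw [rad, rad, h k (by simpa [Nat.lt_succ_iff] using hk)]

lemma rad_pow_m (hm : ∀ k, 2 ≤ m k) (k : ℕ) (x : ∀ j, ZMod (m j)) :
    rad m k x ^ (m k) = 1 := by
  rw [rad, ← Complex.exp_nat_mul]
  rw [Complex.exp_eq_one_iff]
  refine ⟨((x k).val : ℤ), ?_⟩
  have hmk : (m k : ℂ) ≠ 0 := by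
    exact Nat.cast_ne_zero.mpr (by have := hm k; omega)
  field_simp
  norm_cast

lemma rad_ne_one (hm : ∀ k, 2 ≤ m k) (k : ℕ) (x : ∀ j, ZMod (m j)) (hx : x k ≠ 0) :
    rad m k x ≠ 1 := by
  haveI : NeZero (m k) := ⟨by have := hm k; omega⟩
  intro h
  rw [rad, Complex.exp_eq_one_iff] at h
  obtain ⟨j, hj⟩ := h
  have hmk : (m k : ℂ) ≠ 0 := by
    exact Nat.cast_ne_zero.mpr (by have := hm k; omega)
  have hπ : (2 * Real.pi * Complex.I : ℂ) ≠ 0 := by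
    simp [Real.pi_ne_zero, Complex.I_ne_zero]
  have h2 : (((x k).val : ℂ)) = j * (m k : ℂ) := by
    apply mul_left_cancel₀ hπ
    field_simp at hj
    linear_combination (2 * Real.pi * Complex.I) * hj
  have h3 : (((x k).val : ℤ)) = j * (m k : ℤ) := by exact_mod_cast h2
  have hm2 : (2:ℤ) ≤ (m k : ℤ) := by exact_mod_cast hm k
  have hV0 : (0:ℤ) ≤ ((x k).val : ℤ) := Int.natCast_nonneg _
  have hVlt : ((x k).val : ℤ) < (m k : ℤ) := by exact_mod_cast ZMod.val_lt (x k)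
  have hj0 : j = 0 := by
    rcases lt_trichotomy j 0 with hlt | heq | hgt
    · nlinarith
    · exact heq
    · nlinarith
  rw [hj0, zero_mul] at h3
  exact hx ((ZMod.val_eq_zero _).mp (Int.natCast_eq_zero.mp h3))

lemma norm_geom_rad (hm : ∀ k, 2 ≤ m k) (k : ℕ) (x : ∀ j, ZMod (m j)) :
    ‖∑ s ∈ Finset.range (m k), rad m k x ^ s‖ = if x k = 0 then (m k : ℝ) else 0 := by
  by_cases h : x k = 0
  · rw [if_pos h]
    have : rad m k x = 1 := by
      haveI : NeZero (m k) := ⟨by have := hm k; omega⟩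
      rw [rad, h, ZMod.val_zero]
      simp
    simp [this]
  · rw [if_neg h, geom_sum_eq (rad_ne_one hm k x h), rad_pow_m hm k x]
    simp

end Aux17
namespace Aux17
variable {m : ℕ → ℕ}

lemma norm_rr (hm : ∀ k, 2 ≤ m k) (k r : ℕ) (x y : ∀ j, ZMod (m j)) :
    ‖rr m k r x y‖ = ∏ l ∈ Finset.Icc k r, (if (x + y) l = 0 then (m l : ℝ) else 0) := by
  rw [rr, norm_prod]
  refine Finset.prod_congr rfl fun l _ => ?_
  rw [show (∑ s ∈ Finset.range (m l), psi m (Mf m l) (x + y) ^ s)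
      = ∑ s ∈ Finset.range (m l), rad m l (x + y) ^ s by
    refine Finset.sum_congr rfl fun s _ => by rw [psi_Mf hm]]
  exact norm_geom_rad hm l (x + y)

lemma norm_rr_le (hm : ∀ k, 2 ≤ m k) (k r : ℕ) (x y : ∀ j, ZMod (m j)) :
    ‖rr m k r x y‖ ≤ ∏ l ∈ Finset.Icc k r, (m l : ℝ) := by
  rw [norm_rr hm]
  refine Finset.prod_le_prod (fun l _ => by positivity) fun l _ => ?_
  split_ifs
  · exact le_refl _
  · positivity

lemma Icc_eq_insert {k r : ℕ} (h : k ≤ r) :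
    Finset.Icc k r = insert k (Finset.Icc (k + 1) r) := by
  ext j; simp only [Finset.mem_Icc, Finset.mem_insert]; omega

lemma rr_split (h : k ≤ r) (x y : ∀ j, ZMod (m j)) :
    rr m k r x y = (∑ s ∈ Finset.range (m k), psi m (Mf m k) (x + y) ^ s) * rr m (k + 1) r x y := by
  rw [rr, rr, Icc_eq_insert h, Finset.prod_insert (by simp)]

lemma rr_empty (h : r < k) (x y : ∀ j, ZMod (m j)) : rr m k r x y = 1 := by
  rw [rr, Finset.Icc_eq_empty (by omega), Finset.prod_empty]

-- measurability
lemma measurable_sub_pi (x : ∀ j, ZMod (m j)) :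
    Measurable fun t : ∀ j, ZMod (m j) => x - t := by
  refine measurable_pi_lambda _ fun j => ?_
  exact measurable_from_top.comp (measurable_pi_apply j)

lemma measurable_add_pi :
    Measurable fun tu : (∀ j, ZMod (m j)) × (∀ j, ZMod (m j)) => tu.1 + tu.2 := by
  refine measurable_pi_lambda _ fun j => ?_
  have h : Measurable fun tu : (∀ j, ZMod (m j)) × (∀ j, ZMod (m j)) =>
      (tu.1 j, tu.2 j) :=
    ((measurable_pi_apply j).comp measurable_fst).prodMk
      ((measurable_pi_apply j).comp measurable_snd)
  exact (measurable_of_countable fun p : ZMod (m j) × ZMod (m j) => p.1 + p.2).comp h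

lemma measurable_psi (n : ℕ) : Measurable (psi m n) := by
  refine Finset.measurable_prod _ fun k _ => ?_
  have h1 : Measurable fun x : ∀ j, ZMod (m j) => rad m k x :=
    (measurable_from_top
      (f := fun b : ZMod (m k) => Complex.exp (2 * Real.pi * Complex.I * b.val / (m k)))).comp
      (measurable_pi_apply k)
  exact h1.pow_const _

lemma measurable_rr (k r : ℕ) :
    Measurable fun tu : (∀ j, ZMod (m j)) × (∀ j, ZMod (m j)) => rr m k r tu.1 tu.2 := by
  refine Finset.measurable_prod _ fun l _ => ?_
  refine Finset.measurable_sum _ fun s _ => ?_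
  exact (((measurable_psi (Mf m l)).comp measurable_add_pi)).pow_const _

-- cylinders
lemma measurableSet_cyl (k : ℕ) (z : ∀ j, ZMod (m j)) : MeasurableSet (cyl m k z) := by
  have : cyl m k z = ⋂ j ∈ Set.Iio k, (fun x : ∀ i, ZMod (m i) => x j) ⁻¹' {z j} := by
    ext x; simp [cyl]
  rw [this]
  exact MeasurableSet.biInter (Set.to_countable _)
    fun j _ => (measurable_pi_apply j) (MeasurableSpace.measurableSet_top)

lemma cyl_eq_iUnion (k : ℕ) (a : ∀ j, ZMod (m j)) :
    cyl m k a = ⋃ c : ZMod (m k), cyl m (k + 1) (Function.update a k c) := by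
  ext x
  simp only [Set.mem_iUnion, cyl, Set.mem_setOf_eq]
  constructor
  · intro h
    refine ⟨x k, fun j hj => ?_⟩
    rcases Nat.lt_succ_iff_lt_or_eq.mp hj with h' | rfl
    · rw [Function.update_of_ne (by omega)]; exact h j h'
    · simp
  · rintro ⟨c, hc⟩ j hj
    have := hc j (by omega)
    rwa [Function.update_of_ne (by omega)] at this

lemma mem_cyl_update {k : ℕ} {a : ∀ j, ZMod (m j)} {c : ZMod (m k)}
    {x : ∀ j, ZMod (m j)} (hx : x ∈ cyl m (k + 1) (Function.update a k c)) : x k = c := by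
  have := hx k (by omega)
  rwa [Function.update_self] at this

lemma cyl_update_disjoint (k : ℕ) (a : ∀ j, ZMod (m j)) :
    Pairwise (Function.onFun Disjoint fun c : ZMod (m k) => cyl m (k + 1) (Function.update a k c)) := by
  intro c d hcd
  simp only [Function.onFun]
  rw [Set.disjoint_left]
  intro x hxc hxd
  exact hcd ((mem_cyl_update hxc).symm.trans (mem_cyl_update hxd))

end Aux17
namespace Aux17
variable {m : ℕ → ℕ}

lemma prod_cyl_eq_iUnion_left (k l : ℕ) (a b : ∀ j, ZMod (m j)) :
    cyl m k a ×ˢ cyl m l b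
      = ⋃ c : ZMod (m k), (cyl m (k + 1) (Function.update a k c)) ×ˢ cyl m l b := by
  rw [cyl_eq_iUnion k a, Set.iUnion_prod_const]

lemma prod_cyl_eq_iUnion_right (k l : ℕ) (a b : ∀ j, ZMod (m j)) :
    cyl m l a ×ˢ cyl m k b
      = ⋃ c : ZMod (m k), cyl m l a ×ˢ (cyl m (k + 1) (Function.update b k c)) := by
  rw [cyl_eq_iUnion k b, Set.prod_iUnion]

lemma prod_cyl_eq_iUnion2 (k : ℕ) (a b : ∀ j, ZMod (m j)) :
    cyl m k a ×ˢ cyl m k b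
      = ⋃ p : ZMod (m k) × ZMod (m k),
          (cyl m (k + 1) (Function.update a k p.1)) ×ˢ (cyl m (k + 1) (Function.update b k p.2)) := by
  rw [cyl_eq_iUnion k a, cyl_eq_iUnion k b, Set.iUnion_prod_const]
  ext x
  constructor
  · rintro ⟨S, ⟨c, rfl⟩, hx⟩
    simp only [Set.mem_prod, Set.mem_iUnion] at hx
    obtain ⟨h1, d, h2⟩ := hx
    exact Set.mem_iUnion.mpr ⟨(c, d), ⟨h1, h2⟩⟩
  · rintro hx
    obtain ⟨⟨c, d⟩, h1, h2⟩ := Set.mem_iUnion.mp hx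
    refine ⟨_, ⟨c, rfl⟩, h1, Set.mem_iUnion.mpr ⟨d, h2⟩⟩

lemma pieces_disjoint2 (k : ℕ) (a b : ∀ j, ZMod (m j)) :
    Pairwise (Function.onFun Disjoint fun p : ZMod (m k) × ZMod (m k) =>
      (cyl m (k + 1) (Function.update a k p.1)) ×ˢ (cyl m (k + 1) (Function.update b k p.2))) := by
  intro p q hpq
  simp only [Function.onFun]
  rw [Set.disjoint_left]
  rintro x ⟨hx1, hx2⟩ ⟨hy1, hy2⟩
  refine hpq (Prod.ext ?_ ?_)
  · exact (mem_cyl_update hx1).symm.trans (mem_cyl_update hy1)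
  · exact (mem_cyl_update hx2).symm.trans (mem_cyl_update hy2)

lemma pieces_disjoint_left (k : ℕ) (a : ∀ j, ZMod (m j)) (B : Set (∀ j, ZMod (m j))) :
    Pairwise (Function.onFun Disjoint fun c : ZMod (m k) =>
      (cyl m (k + 1) (Function.update a k c)) ×ˢ B) := by
  intro p q hpq
  simp only [Function.onFun]
  rw [Set.disjoint_left]
  rintro x ⟨hx1, _⟩ ⟨hy1, _⟩
  exact hpq ((mem_cyl_update hx1).symm.trans (mem_cyl_update hy1))

lemma pieces_disjoint_right (k : ℕ) (b : ∀ j, ZMod (m j)) (B : Set (∀ j, ZMod (m j))) :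
    Pairwise (Function.onFun Disjoint fun c : ZMod (m k) =>
      B ×ˢ (cyl m (k + 1) (Function.update b k c))) := by
  intro p q hpq
  simp only [Function.onFun]
  rw [Set.disjoint_left]
  rintro x ⟨_, hx1⟩ ⟨_, hy1⟩
  exact hpq ((mem_cyl_update hx1).symm.trans (mem_cyl_update hy1))

lemma ennreal_helper (a b : ℝ≥0∞) (ha0 : a ≠ 0) (hat : a ≠ ⊤) : a * (a * b)⁻¹ = b⁻¹ := by
  rw [ENNReal.mul_inv (Or.inl ha0) (Or.inl hat), ← mul_assoc, ENNReal.mul_inv_cancel ha0 hat,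
    one_mul]

section Meas

variable (μ : MeasureTheory.Measure ((∀ j, ZMod (m j)) × (∀ j, ZMod (m j))))

lemma measure_cyl_left (hm : ∀ k, 2 ≤ m k)
    (hcyl : ∀ (k : ℕ) (z w : ∀ j, ZMod (m j)),
      μ ((cyl m k z) ×ˢ (cyl m k w)) = ((Mf m k : ℝ≥0∞) * (Mf m k : ℝ≥0∞))⁻¹) :
    ∀ d k (a b : ∀ j, ZMod (m j)),
      μ (cyl m k a ×ˢ cyl m (k + d) b) = ((Mf m k : ℝ≥0∞) * (Mf m (k + d) : ℝ≥0∞))⁻¹ := by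
  intro d
  induction d with
  | zero => intro k a b; exact hcyl k a b
  | succ d ih =>
    intro k a b
    haveI : NeZero (m k) := ⟨by have := hm k; omega⟩
    rw [prod_cyl_eq_iUnion_left, MeasureTheory.measure_iUnion
      (pieces_disjoint_left k a _)
      (fun c => (measurableSet_cyl _ _).prod (measurableSet_cyl _ _)), tsum_fintype]
    have e : k + 1 + d = k + (d + 1) := by omega
    have hval : ∀ c : ZMod (m k),
        μ (cyl m (k + 1) (Function.update a k c) ×ˢ cyl m (k + (d + 1)) b)
          = ((Mf m (k + 1) : ℝ≥0∞) * (Mf m (k + (d + 1)) : ℝ≥0∞))⁻¹ := by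
      intro c
      have := ih (k + 1) (Function.update a k c) b
      rwa [e] at this
    rw [Finset.sum_congr rfl fun c _ => hval c, Finset.sum_const, Finset.card_univ,
      ZMod.card, nsmul_eq_mul]
    have h1 : ((Mf m (k + 1) : ℝ≥0∞)) = (m k : ℝ≥0∞) * (Mf m k : ℝ≥0∞) := by
      rw [show Mf m (k + 1) = m k * Mf m k from rfl]; push_cast; ring
    rw [h1, mul_assoc]
    exact ennreal_helper _ _ (by have := hm k; simp; omega)
      (ENNReal.natCast_ne_top _)

lemma measure_cyl_right (hm : ∀ k, 2 ≤ m k)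
    (hcyl : ∀ (k : ℕ) (z w : ∀ j, ZMod (m j)),
      μ ((cyl m k z) ×ˢ (cyl m k w)) = ((Mf m k : ℝ≥0∞) * (Mf m k : ℝ≥0∞))⁻¹) :
    ∀ d k (a b : ∀ j, ZMod (m j)),
      μ (cyl m (k + d) a ×ˢ cyl m k b) = ((Mf m (k + d) : ℝ≥0∞) * (Mf m k : ℝ≥0∞))⁻¹ := by
  intro d
  induction d with
  | zero => intro k a b; exact hcyl k a b
  | succ d ih =>
    intro k a b
    haveI : NeZero (m k) := ⟨by have := hm k; omega⟩
    rw [prod_cyl_eq_iUnion_right, MeasureTheory.measure_iUnion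
      (pieces_disjoint_right k b _)
      (fun c => (measurableSet_cyl _ _).prod (measurableSet_cyl _ _)), tsum_fintype]
    have e : k + 1 + d = k + (d + 1) := by omega
    have hval : ∀ c : ZMod (m k),
        μ (cyl m (k + (d + 1)) a ×ˢ cyl m (k + 1) (Function.update b k c))
          = ((Mf m (k + (d + 1)) : ℝ≥0∞) * (Mf m (k + 1) : ℝ≥0∞))⁻¹ := by
      intro c
      have := ih (k + 1) a (Function.update b k c)
      rwa [e] at this
    rw [Finset.sum_congr rfl fun c _ => hval c, Finset.sum_const, Finset.card_univ,
      ZMod.card, nsmul_eq_mul]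
    have h1 : ((Mf m (k + 1) : ℝ≥0∞)) = (m k : ℝ≥0∞) * (Mf m k : ℝ≥0∞) := by
      rw [show Mf m (k + 1) = m k * Mf m k from rfl]; push_cast; ring
    rw [h1, mul_comm ((Mf m (k + (d + 1)) : ℝ≥0∞)) _, mul_assoc,
      mul_comm ((Mf m k : ℝ≥0∞)) ((Mf m (k + (d + 1)) : ℝ≥0∞)),
      ennreal_helper _ _ (by have := hm k; simp; omega)
        (ENNReal.natCast_ne_top _), mul_comm]

end Meas
end Aux17
namespace Aux17
variable {m : ℕ → ℕ}

open MeasureTheory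

section KeyInt

variable (μ : Measure ((∀ j, ZMod (m j)) × (∀ j, ZMod (m j)))) [IsProbabilityMeasure μ]

lemma integrableOn_bdd {f : ((∀ j, ZMod (m j)) × (∀ j, ZMod (m j))) → ℝ}
    (hf : Measurable f) (C : ℝ) (hC : ∀ z, ‖f z‖ ≤ C)
    (S : Set ((∀ j, ZMod (m j)) × (∀ j, ZMod (m j)))) : IntegrableOn f S μ :=
  Integrable.mono' (integrable_const C) hf.aestronglyMeasurable (Filter.Eventually.of_forall hC)

lemma integrableOn_rr (hm : ∀ k, 2 ≤ m k) (k r : ℕ)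
    (S : Set ((∀ j, ZMod (m j)) × (∀ j, ZMod (m j)))) :
    IntegrableOn (fun tu => ‖rr m k r tu.1 tu.2‖) S μ := by
  refine integrableOn_bdd μ (measurable_rr k r).norm (∏ l ∈ Finset.Icc k r, (m l : ℝ)) ?_ S
  intro z
  rw [norm_norm]
  exact norm_rr_le hm k r z.1 z.2

lemma keyRR (hm : ∀ k, 2 ≤ m k)
    (hcyl : ∀ (k : ℕ) (z w : ∀ j, ZMod (m j)),
      μ ((cyl m k z) ×ˢ (cyl m k w)) = ((Mf m k : ℝ≥0∞) * (Mf m k : ℝ≥0∞))⁻¹)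
    (r : ℕ) :
    ∀ k (a b : ∀ j, ZMod (m j)),
      ∫ tu in (cyl m k a) ×ˢ (cyl m k b), ‖rr m k r tu.1 tu.2‖ ∂μ
        = ((Mf m k : ℝ) * (Mf m k : ℝ))⁻¹ := by
  suffices H : ∀ D k (a b : ∀ j, ZMod (m j)), r + 1 - k = D →
      ∫ tu in (cyl m k a) ×ˢ (cyl m k b), ‖rr m k r tu.1 tu.2‖ ∂μ
        = ((Mf m k : ℝ) * (Mf m k : ℝ))⁻¹ by
    exact fun k a b => H (r + 1 - k) k a b rfl
  intro D
  induction D with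
  | zero =>
    intro k a b hd
    have hrk : r < k := by omega
    have : ∀ tu : (∀ j, ZMod (m j)) × (∀ j, ZMod (m j)), ‖rr m k r tu.1 tu.2‖ = 1 := by
      intro tu; rw [rr_empty hrk, norm_one]
    simp only [this]
    rw [setIntegral_const, measureReal_def, hcyl k a b, smul_eq_mul, mul_one, ENNReal.toReal_inv,
      ENNReal.toReal_mul]
    simp
  | succ d ih =>
    intro k a b hd
    have hkr : k ≤ r := by omega
    haveI : NeZero (m k) := ⟨by have := hm k; omega⟩
    rw [prod_cyl_eq_iUnion2 k a b]
    rw [integral_iUnion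
      (fun p => (measurableSet_cyl _ _).prod (measurableSet_cyl _ _))
      (pieces_disjoint2 k a b)
      (by rw [← prod_cyl_eq_iUnion2 k a b]; exact integrableOn_rr μ hm k r _)]
    rw [tsum_fintype]
    have hpiece : ∀ p : ZMod (m k) × ZMod (m k),
        ∫ tu in (cyl m (k + 1) (Function.update a k p.1)) ×ˢ
            (cyl m (k + 1) (Function.update b k p.2)), ‖rr m k r tu.1 tu.2‖ ∂μ
          = (if p.1 + p.2 = 0 then (m k : ℝ) else 0)
              * ((Mf m (k + 1) : ℝ) * (Mf m (k + 1) : ℝ))⁻¹ := by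
      intro p
      have heq : Set.EqOn (fun tu : (∀ j, ZMod (m j)) × (∀ j, ZMod (m j)) =>
          ‖rr m k r tu.1 tu.2‖)
          (fun tu => (if p.1 + p.2 = 0 then (m k : ℝ) else 0) * ‖rr m (k + 1) r tu.1 tu.2‖)
          ((cyl m (k + 1) (Function.update a k p.1)) ×ˢ
            (cyl m (k + 1) (Function.update b k p.2))) := by
        rintro tu ⟨h1, h2⟩
        simp only
        rw [rr_split hkr, norm_mul]
        congr 1
        rw [show (∑ s ∈ Finset.range (m k), psi m (Mf m k) (tu.1 + tu.2) ^ s)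
            = ∑ s ∈ Finset.range (m k), rad m k (tu.1 + tu.2) ^ s by
          exact Finset.sum_congr rfl fun s _ => by rw [psi_Mf hm]]
        rw [norm_geom_rad hm k (tu.1 + tu.2)]
        have : (tu.1 + tu.2) k = p.1 + p.2 := by
          rw [Pi.add_apply, mem_cyl_update h1, mem_cyl_update h2]
        rw [this]
      rw [setIntegral_congr_fun ((measurableSet_cyl _ _).prod (measurableSet_cyl _ _)) heq,
        integral_const_mul, ih (k + 1) _ _ (by omega)]
    rw [Finset.sum_congr rfl fun p _ => hpiece p]
    rw [Fintype.sum_prod_type]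
    have hrow : ∀ c : ZMod (m k),
        (∑ d' : ZMod (m k), (if c + d' = 0 then (m k : ℝ) else 0)
            * ((Mf m (k + 1) : ℝ) * (Mf m (k + 1) : ℝ))⁻¹)
          = (m k : ℝ) * ((Mf m (k + 1) : ℝ) * (Mf m (k + 1) : ℝ))⁻¹ := by
      intro c
      have hcond : ∀ d' : ZMod (m k), (c + d' = 0) = (d' = -c) :=
        fun d' => propext ⟨fun h => eq_neg_of_add_eq_zero_right h,
          fun h => by rw [h, add_neg_cancel]⟩
      simp_rw [hcond, ite_mul, zero_mul]
      rw [Finset.sum_ite_eq' Finset.univ (-c)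
        (fun _ => (m k : ℝ) * ((Mf m (k + 1) : ℝ) * (Mf m (k + 1) : ℝ))⁻¹)]
      simp
    rw [Finset.sum_congr rfl fun c _ => hrow c, Finset.sum_const, Finset.card_univ,
      ZMod.card, nsmul_eq_mul]
    have h1 : ((Mf m (k + 1) : ℝ)) = (m k : ℝ) * (Mf m k : ℝ) := by
      rw [show Mf m (k + 1) = m k * Mf m k from rfl]; push_cast; ring
    have hmk : (m k : ℝ) ≠ 0 := by have := hm k; positivity
    have hMk : (Mf m k : ℝ) ≠ 0 := by have := Mf_pos hm k; positivity
    rw [h1]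
    field_simp

lemma keyRR' (hm : ∀ k, 2 ≤ m k)
    (hcyl : ∀ (k : ℕ) (z w : ∀ j, ZMod (m j)),
      μ ((cyl m k z) ×ˢ (cyl m k w)) = ((Mf m k : ℝ≥0∞) * (Mf m k : ℝ≥0∞))⁻¹)
    (r k : ℕ) (a b : ∀ j, ZMod (m j)) :
    ∫ tu in (cyl m k a) ×ˢ (cyl m k b), ‖rr m (k + 1) r tu.1 tu.2‖ ∂μ
      = ((Mf m k : ℝ) * (Mf m k : ℝ))⁻¹ := by
  haveI : NeZero (m k) := ⟨by have := hm k; omega⟩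
  rw [prod_cyl_eq_iUnion2 k a b]
  rw [integral_iUnion
    (fun p => (measurableSet_cyl _ _).prod (measurableSet_cyl _ _))
    (pieces_disjoint2 k a b)
    (by rw [← prod_cyl_eq_iUnion2 k a b]; exact integrableOn_rr μ hm (k + 1) r _)]
  rw [tsum_fintype]
  rw [Finset.sum_congr rfl fun p _ => keyRR μ hm hcyl r (k + 1) _ _]
  rw [Finset.sum_const, Finset.card_univ, Fintype.card_prod, ZMod.card, nsmul_eq_mul]
  have h1 : ((Mf m (k + 1) : ℝ)) = (m k : ℝ) * (Mf m k : ℝ) := by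
    rw [show Mf m (k + 1) = m k * Mf m k from rfl]; push_cast; ring
  have hmk : (m k : ℝ) ≠ 0 := by have := hm k; positivity
  have hMk : (Mf m k : ℝ) ≠ 0 := by have := Mf_pos hm k; positivity
  rw [h1]
  push_cast
  field_simp

end KeyInt
end Aux17
namespace Aux17
variable {m : ℕ → ℕ}

open MeasureTheory Filter

lemma triple_sum_le {n1 n2 B' N : ℕ} {D : ℝ} (hD : 0 ≤ D)
    {K V : ℕ → Finset ℕ} {g : ℕ → ℕ → ℕ → ℝ}
    (hK : ∀ q, (K q).card ≤ n2) (hV : ∀ q, (V q).card ≤ B')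
    (hg : ∀ q ∈ Finset.range n1, ∀ k ∈ K q, ∀ v ∈ V q, g q k v ≤ if q < N then D else 0) :
    ∑ q ∈ Finset.range n1, ∑ k ∈ K q, ∑ v ∈ V q, g q k v
      ≤ (N : ℝ) * ((n2 : ℝ) * ((B' : ℝ) * D)) := by
  have hE0 : (0:ℝ) ≤ (n2:ℝ) * ((B':ℝ) * D) := by positivity
  have hBD : (0:ℝ) ≤ (B':ℝ) * D := by positivity
  calc ∑ q ∈ Finset.range n1, ∑ k ∈ K q, ∑ v ∈ V q, g q k v
      ≤ ∑ q ∈ Finset.range n1, (if q < N then (n2:ℝ) * ((B':ℝ) * D) else 0) := by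
        refine Finset.sum_le_sum fun q hq => ?_
        by_cases hqN : q < N
        · simp only [if_pos hqN]
          calc ∑ k ∈ K q, ∑ v ∈ V q, g q k v
              ≤ ∑ _k ∈ K q, ((B':ℝ) * D) := by
                refine Finset.sum_le_sum fun k hk => ?_
                calc ∑ v ∈ V q, g q k v ≤ (V q).card • D :=
                      Finset.sum_le_card_nsmul _ _ _ fun v hv => by
                        have := hg q hq k hk v hv; rwa [if_pos hqN] at this
                  _ = ((V q).card : ℝ) * D := nsmul_eq_mul _ _
                  _ ≤ (B':ℝ) * D :=
                      mul_le_mul_of_nonneg_right (by exact_mod_cast hV q) hD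
            _ = ((K q).card : ℝ) * ((B':ℝ) * D) := by
                rw [Finset.sum_const, nsmul_eq_mul]
            _ ≤ (n2:ℝ) * ((B':ℝ) * D) :=
                mul_le_mul_of_nonneg_right (by exact_mod_cast hK q) hBD
        · simp only [if_neg hqN]
          refine Finset.sum_nonpos fun k hk => Finset.sum_nonpos fun v hv => ?_
          have := hg q hq k hk v hv; rwa [if_neg hqN] at this
    _ = (((Finset.range n1).filter (· < N)).card : ℝ) * ((n2:ℝ) * ((B':ℝ) * D)) := by
        rw [← Finset.sum_filter, Finset.sum_const, nsmul_eq_mul]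
    _ ≤ (N:ℝ) * ((n2:ℝ) * ((B':ℝ) * D)) := by
        have hsub : (Finset.range n1).filter (· < N) ⊆ Finset.range N := fun q hq => by
          simp only [Finset.mem_filter, Finset.mem_range] at hq ⊢; exact hq.2
        have hcard : ((((Finset.range n1).filter (· < N)).card : ℕ) : ℝ) ≤ (N:ℝ) := by
          exact_mod_cast (Finset.card_le_card hsub).trans_eq (Finset.card_range N)
        exact mul_le_mul_of_nonneg_right hcard hE0

lemma lim_aux : Tendsto (fun n : ℕ => ((n:ℝ) + 1) * (1/2:ℝ)^n) atTop (nhds 0) := by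
  have h : Summable (fun n : ℕ => ((n:ℝ) + 1) * (1/2:ℝ)^n) := by
    have h1 : Summable (fun n : ℕ => ‖((n:ℝ)^1 * (1/2:ℝ)^n)‖) :=
      summable_norm_pow_mul_geometric_of_norm_lt_one 1 (by norm_num)
    have h2 : Summable (fun n : ℕ => ‖((n:ℝ)^0 * (1/2:ℝ)^n)‖) :=
      summable_norm_pow_mul_geometric_of_norm_lt_one 0 (by norm_num)
    refine (h1.of_norm.add h2.of_norm).congr fun n => by ring
  exact h.tendsto_atTop_zero

lemma main_aux (hm : ∀ k, 2 ≤ m k) (B : ℕ) (hB : ∀ k, m k ≤ B)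
    (μ : Measure ((∀ j, ZMod (m j)) × (∀ j, ZMod (m j)))) [IsProbabilityMeasure μ]
    (hcyl : ∀ (k : ℕ) (z w : ∀ j, ZMod (m j)),
      μ ((cyl m k z) ×ˢ (cyl m k w)) = ((Mf m k : ℝ≥0∞) * (Mf m k : ℝ≥0∞))⁻¹)
    (F : ((∀ j, ZMod (m j)) × (∀ j, ZMod (m j))) → ℂ) (N : ℕ) (hN1 : 1 ≤ N)
    (C2 : ℝ) (hC2 : 0 ≤ C2)
    (hFm : Measurable F)
    (hFb : ∀ z w, ‖F z - F w‖ ≤ C2)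
    (hFdep : ∀ z w : ((∀ j, ZMod (m j)) × (∀ j, ZMod (m j))),
      (∀ j, j < N → z.1 j = w.1 j) → (∀ j, j < N → z.2 j = w.2 j) → F z = F w)
    (x y : ∀ j, ZMod (m j)) :
    Tendsto (fun n => Wml m μ n F x y) atTop (nhds 0) := by
  have hΔm : Measurable fun tu : (∀ j, ZMod (m j)) × (∀ j, ZMod (m j)) =>
      ‖F (x - tu.1, y - tu.2) - F (x, y)‖ :=
    ((hFm.comp (((measurable_sub_pi x).comp measurable_fst).prodMk
      ((measurable_sub_pi y).comp measurable_snd))).sub measurable_const).norm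
  have hΔb : ∀ tu : (∀ j, ZMod (m j)) × (∀ j, ZMod (m j)),
      ‖F (x - tu.1, y - tu.2) - F (x, y)‖ ≤ C2 := fun tu => hFb _ _
  -- integral bounds of the first kind
  have hI12 : ∀ (r k : ℕ) (a b : ∀ j, ZMod (m j)),
      ∫ tu in (cyl m k a) ×ˢ (cyl m k b),
          ‖F (x - tu.1, y - tu.2) - F (x, y)‖ * ‖rr m (k + 1) r tu.1 tu.2‖ ∂μ
        ≤ C2 * ((Mf m k : ℝ) * (Mf m k : ℝ))⁻¹ := by
    intro r k a b
    have hint1 : IntegrableOn (fun tu : (∀ j, ZMod (m j)) × (∀ j, ZMod (m j)) =>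
        ‖F (x - tu.1, y - tu.2) - F (x, y)‖ * ‖rr m (k + 1) r tu.1 tu.2‖)
        ((cyl m k a) ×ˢ (cyl m k b)) μ := by
      refine integrableOn_bdd μ (hΔm.mul (measurable_rr (k + 1) r).norm)
        (C2 * ∏ l ∈ Finset.Icc (k + 1) r, (m l : ℝ)) (fun z => ?_) _
      rw [Pi.mul_apply, norm_mul, norm_norm, norm_norm]
      exact mul_le_mul (hΔb z) (norm_rr_le hm (k + 1) r z.1 z.2) (norm_nonneg _) hC2
    have hint2 : IntegrableOn (fun tu : (∀ j, ZMod (m j)) × (∀ j, ZMod (m j)) =>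
        C2 * ‖rr m (k + 1) r tu.1 tu.2‖) ((cyl m k a) ×ˢ (cyl m k b)) μ :=
      (integrableOn_rr μ hm (k + 1) r _).const_mul C2
    calc ∫ tu in (cyl m k a) ×ˢ (cyl m k b),
            ‖F (x - tu.1, y - tu.2) - F (x, y)‖ * ‖rr m (k + 1) r tu.1 tu.2‖ ∂μ
        ≤ ∫ tu in (cyl m k a) ×ˢ (cyl m k b), C2 * ‖rr m (k + 1) r tu.1 tu.2‖ ∂μ :=
          integral_mono hint1 hint2
            (fun tu => mul_le_mul_of_nonneg_right (hΔb tu) (norm_nonneg _))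
      _ = C2 * ∫ tu in (cyl m k a) ×ˢ (cyl m k b), ‖rr m (k + 1) r tu.1 tu.2‖ ∂μ :=
          integral_const_mul _ _
      _ = C2 * ((Mf m k : ℝ) * (Mf m k : ℝ))⁻¹ := by rw [keyRR' μ hm hcyl]
  -- integral bounds of the second kind
  have htoReal : ∀ p q : ℕ,
      (((p : ℝ≥0∞) * (q : ℝ≥0∞))⁻¹).toReal = ((p : ℝ) * (q : ℝ))⁻¹ := by
    intro p q
    rw [ENNReal.toReal_inv, ENNReal.toReal_mul, ENNReal.toReal_natCast, ENNReal.toReal_natCast]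
  have hI3 : ∀ (nn i : ℕ) (a b : ∀ j, ZMod (m j)), i ≤ nn →
      ∫ tu in (cyl m nn a) ×ˢ (cyl m i b), ‖F (x - tu.1, y - tu.2) - F (x, y)‖ ∂μ
        ≤ C2 * ((Mf m nn : ℝ) * (Mf m i : ℝ))⁻¹ := by
    intro nn i a b hi
    have hμ : μ ((cyl m nn a) ×ˢ (cyl m i b))
        = ((Mf m nn : ℝ≥0∞) * (Mf m i : ℝ≥0∞))⁻¹ := by
      have := measure_cyl_right μ hm hcyl (nn - i) i a b
      rwa [show i + (nn - i) = nn by omega] at this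
    calc ∫ tu in (cyl m nn a) ×ˢ (cyl m i b), ‖F (x - tu.1, y - tu.2) - F (x, y)‖ ∂μ
        ≤ ∫ _tu in (cyl m nn a) ×ˢ (cyl m i b), C2 ∂μ :=
          integral_mono
            (integrableOn_bdd μ hΔm C2 (fun z => by rw [norm_norm]; exact hΔb z) _)
            (integrable_const _) hΔb
      _ = (μ ((cyl m nn a) ×ˢ (cyl m i b))).toReal * C2 := by
          rw [setIntegral_const, measureReal_def, smul_eq_mul]
      _ = C2 * ((Mf m nn : ℝ) * (Mf m i : ℝ))⁻¹ := by
          rw [hμ, htoReal, mul_comm]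
  have hI4 : ∀ (nn i : ℕ) (a b : ∀ j, ZMod (m j)), i ≤ nn →
      ∫ tu in (cyl m i a) ×ˢ (cyl m nn b), ‖F (x - tu.1, y - tu.2) - F (x, y)‖ ∂μ
        ≤ C2 * ((Mf m i : ℝ) * (Mf m nn : ℝ))⁻¹ := by
    intro nn i a b hi
    have hμ : μ ((cyl m i a) ×ˢ (cyl m nn b))
        = ((Mf m i : ℝ≥0∞) * (Mf m nn : ℝ≥0∞))⁻¹ := by
      have := measure_cyl_left μ hm hcyl (nn - i) i a b
      rwa [show i + (nn - i) = nn by omega] at this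
    calc ∫ tu in (cyl m i a) ×ˢ (cyl m nn b), ‖F (x - tu.1, y - tu.2) - F (x, y)‖ ∂μ
        ≤ ∫ _tu in (cyl m i a) ×ˢ (cyl m nn b), C2 ∂μ :=
          integral_mono
            (integrableOn_bdd μ hΔm C2 (fun z => by rw [norm_norm]; exact hΔb z) _)
            (integrable_const _) hΔb
      _ = (μ ((cyl m i a) ×ˢ (cyl m nn b))).toReal * C2 := by
          rw [setIntegral_const, measureReal_def, smul_eq_mul]
      _ = C2 * ((Mf m i : ℝ) * (Mf m nn : ℝ))⁻¹ := by
          rw [hμ, htoReal, mul_comm]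
  -- vanishing lemmas
  have hcoord1 : ∀ (k : ℕ) (t : ∀ j, ZMod (m j)), t ∈ cyl m k 0 →
      ∀ j, j < k → (x - t) j = x j := by
    intro k t ht j hj
    have := ht j hj
    rw [Pi.zero_apply] at this
    rw [Pi.sub_apply, this, sub_zero]
  have hcoord1y : ∀ (k : ℕ) (t : ∀ j, ZMod (m j)), t ∈ cyl m k 0 →
      ∀ j, j < k → (y - t) j = y j := by
    intro k t ht j hj
    have := ht j hj
    rw [Pi.zero_apply] at this
    rw [Pi.sub_apply, this, sub_zero]
  have hcoord2 : ∀ (k q v : ℕ) (t : ∀ j, ZMod (m j)), t ∈ cyl m k (v • evec m q) →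
      ∀ j, j < k → j ≠ q → (y - t) j = y j := by
    intro k q v t ht j hj hjq
    have h1 := ht j hj
    have h2 : (v • evec m q) j = 0 := by
      simp [evec, Pi.smul_apply, hjq]
    rw [Pi.sub_apply, h1, h2, sub_zero]
  have hcoord2x : ∀ (k q v : ℕ) (t : ∀ j, ZMod (m j)), t ∈ cyl m k (v • evec m q) →
      ∀ j, j < k → j ≠ q → (x - t) j = x j := by
    intro k q v t ht j hj hjq
    have h1 := ht j hj
    have h2 : (v • evec m q) j = 0 := by
      simp [evec, Pi.smul_apply, hjq]
    rw [Pi.sub_apply, h1, h2, sub_zero]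
  have hvan1 : ∀ (r q k v : ℕ), N ≤ q → q ≤ k →
      ∫ tu in (cyl m k 0) ×ˢ (cyl m k (v • evec m q)),
          ‖F (x - tu.1, y - tu.2) - F (x, y)‖ * ‖rr m (k + 1) r tu.1 tu.2‖ ∂μ = 0 := by
    intro r q k v hNq hqk
    have heq : Set.EqOn (fun tu : (∀ j, ZMod (m j)) × (∀ j, ZMod (m j)) =>
        ‖F (x - tu.1, y - tu.2) - F (x, y)‖ * ‖rr m (k + 1) r tu.1 tu.2‖)
        (fun _ => (0:ℝ)) ((cyl m k 0) ×ˢ (cyl m k (v • evec m q))) := by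
      rintro tu ⟨h1, h2⟩
      have hFz : F (x - tu.1, y - tu.2) = F (x, y) := by
        refine hFdep _ _ (fun j hj => hcoord1 k tu.1 h1 j (by omega))
          (fun j hj => hcoord2 k q v tu.2 h2 j (by omega) (by omega))
      simp only [hFz, sub_self, norm_zero, zero_mul]
    rw [setIntegral_congr_fun ((measurableSet_cyl _ _).prod (measurableSet_cyl _ _)) heq]
    simp
  have hvan2 : ∀ (r q k v : ℕ), N ≤ q → q ≤ k →
      ∫ tu in (cyl m k (v • evec m q)) ×ˢ (cyl m k 0),
          ‖F (x - tu.1, y - tu.2) - F (x, y)‖ * ‖rr m (k + 1) r tu.1 tu.2‖ ∂μ = 0 := by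
    intro r q k v hNq hqk
    have heq : Set.EqOn (fun tu : (∀ j, ZMod (m j)) × (∀ j, ZMod (m j)) =>
        ‖F (x - tu.1, y - tu.2) - F (x, y)‖ * ‖rr m (k + 1) r tu.1 tu.2‖)
        (fun _ => (0:ℝ)) ((cyl m k (v • evec m q)) ×ˢ (cyl m k 0)) := by
      rintro tu ⟨h1, h2⟩
      have hFz : F (x - tu.1, y - tu.2) = F (x, y) := by
        refine hFdep _ _ (fun j hj => hcoord2x k q v tu.1 h1 j (by omega) (by omega))
          (fun j hj => hcoord1y k tu.2 h2 j (by omega))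
      simp only [hFz, sub_self, norm_zero, zero_mul]
    rw [setIntegral_congr_fun ((measurableSet_cyl _ _).prod (measurableSet_cyl _ _)) heq]
    simp
  have hvan3 : ∀ (nn i s' v : ℕ), N ≤ s' → N ≤ nn → s' ≤ i →
      ∫ tu in (cyl m nn 0) ×ˢ (cyl m i (v • evec m s')),
          ‖F (x - tu.1, y - tu.2) - F (x, y)‖ ∂μ = 0 := by
    intro nn i s' v hNs hNn hsi
    have heq : Set.EqOn (fun tu : (∀ j, ZMod (m j)) × (∀ j, ZMod (m j)) =>
        ‖F (x - tu.1, y - tu.2) - F (x, y)‖)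
        (fun _ => (0:ℝ)) ((cyl m nn 0) ×ˢ (cyl m i (v • evec m s'))) := by
      rintro tu ⟨h1, h2⟩
      have hFz : F (x - tu.1, y - tu.2) = F (x, y) := by
        refine hFdep _ _ (fun j hj => hcoord1 nn tu.1 h1 j (by omega))
          (fun j hj => hcoord2 i s' v tu.2 h2 j (by omega) (by omega))
      simp only [hFz, sub_self, norm_zero]
    rw [setIntegral_congr_fun ((measurableSet_cyl _ _).prod (measurableSet_cyl _ _)) heq]
    simp
  have hvan4 : ∀ (nn i s' v : ℕ), N ≤ s' → N ≤ nn → s' ≤ i →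
      ∫ tu in (cyl m i (v • evec m s')) ×ˢ (cyl m nn 0),
          ‖F (x - tu.1, y - tu.2) - F (x, y)‖ ∂μ = 0 := by
    intro nn i s' v hNs hNn hsi
    have heq : Set.EqOn (fun tu : (∀ j, ZMod (m j)) × (∀ j, ZMod (m j)) =>
        ‖F (x - tu.1, y - tu.2) - F (x, y)‖)
        (fun _ => (0:ℝ)) ((cyl m i (v • evec m s')) ×ˢ (cyl m nn 0)) := by
      rintro tu ⟨h1, h2⟩
      have hFz : F (x - tu.1, y - tu.2) = F (x, y) := by
        refine hFdep _ _ (fun j hj => hcoord2x i s' v tu.1 h1 j (by omega) (by omega))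
          (fun j hj => hcoord1y nn tu.2 h2 j (by omega))
      simp only [hFz, sub_self, norm_zero]
    rw [setIntegral_congr_fun ((measurableSet_cyl _ _).prod (measurableSet_cyl _ _)) heq]
    simp
  -- nonnegativity
  have hW0 : ∀ n, 0 ≤ Wml m μ n F x y := by
    intro n
    unfold Wml
    refine add_nonneg (add_nonneg (add_nonneg ?_ ?_) ?_) ?_
    · refine mul_nonneg (by positivity) (Finset.sum_nonneg fun q _ =>
        Finset.sum_nonneg fun k _ => Finset.sum_nonneg fun v _ =>
          mul_nonneg (by positivity) (integral_nonneg fun tu => by positivity))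
    · refine mul_nonneg (by positivity) (Finset.sum_nonneg fun q _ =>
        Finset.sum_nonneg fun k _ => Finset.sum_nonneg fun v _ =>
          mul_nonneg (by positivity) (integral_nonneg fun tu => by positivity))
    · refine Finset.sum_nonneg fun q _ =>
        Finset.sum_nonneg fun k _ => Finset.sum_nonneg fun v _ =>
          mul_nonneg (by positivity) (integral_nonneg fun tu => by positivity)
    · refine Finset.sum_nonneg fun q _ =>
        Finset.sum_nonneg fun k _ => Finset.sum_nonneg fun v _ =>
          mul_nonneg (by positivity) (integral_nonneg fun tu => by positivity)
  -- main estimate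
  have hWle : ∀ n, N ≤ n → Wml m μ n F x y
      ≤ 4 * ((N:ℝ) * (((n:ℝ) + 1) * ((B:ℝ) * (C2 * ((Mf m N : ℝ) * (1/2:ℝ)^n))))) := by
    intro n hn
    have h1n : 1 ≤ n := le_trans hN1 hn
    have hMn0 : (0:ℝ) < (Mf m n : ℝ) := by exact_mod_cast Mf_pos hm n
    have hMninv : (Mf m n : ℝ)⁻¹ ≤ (1/2:ℝ)^n := by
      rw [one_div, inv_pow]
      refine inv_anti₀ (by positivity) ?_
      exact_mod_cast two_pow_le_Mf hm n
    have hMN0 : (0:ℝ) ≤ (Mf m N : ℝ) := by positivity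
    have hK1 : ∀ q, (Finset.Icc q (n-1)).card ≤ n := by
      intro q; rw [Nat.card_Icc]; omega
    have hK3 : ∀ q, (Finset.Icc q n).card ≤ n + 1 := by
      intro q; rw [Nat.card_Icc]; omega
    have hV1 : ∀ q, (Finset.Icc 1 (m q - 1)).card ≤ B := by
      intro q; rw [Nat.card_Icc]; have := hB q; omega
    set E : ℝ := (N:ℝ) * (((n:ℝ) + 1) * ((B:ℝ) * (C2 * ((Mf m N : ℝ) * (1/2:ℝ)^n)))) with hE
    have hEpre : (N:ℝ) * (((n:ℝ) + 1) * ((B:ℝ) * (C2 * ((Mf m N : ℝ) * (Mf m n : ℝ)⁻¹)))) ≤ E := by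
      rw [hE]; gcongr
    have hEpre2 : (N:ℝ) * ((n:ℝ) * ((B:ℝ) * (C2 * ((Mf m N : ℝ) * (Mf m n : ℝ)⁻¹)))) ≤ E := by
      rw [hE]
      gcongr
      linarith
    -- per-term bounds, first kind
    have hg1 : ∀ q ∈ Finset.range n, ∀ k ∈ Finset.Icc q (n-1), ∀ v ∈ Finset.Icc 1 (m q - 1),
        (Mf m q : ℝ) * (Mf m k : ℝ) ^ 2 *
            ∫ tu in (cyl m k 0) ×ˢ (cyl m k (v • evec m q)),
              ‖F (x - tu.1, y - tu.2) - F (x, y)‖ * ‖rr m (k + 1) (n - 1) tu.1 tu.2‖ ∂μ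
          ≤ if q < N then C2 * (Mf m N : ℝ) else 0 := by
      intro q hq k hk v hv
      by_cases hqN : q < N
      · rw [if_pos hqN]
        refine le_trans (mul_le_mul_of_nonneg_left (hI12 (n-1) k _ _) (by positivity)) ?_
        have hMk0 : (0:ℝ) < (Mf m k : ℝ) := by exact_mod_cast Mf_pos hm k
        have hMq : (Mf m q : ℝ) ≤ (Mf m N : ℝ) := by exact_mod_cast Mf_mono hm hqN.le
        calc (Mf m q : ℝ) * (Mf m k : ℝ) ^ 2 * (C2 * ((Mf m k : ℝ) * (Mf m k : ℝ))⁻¹)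
            = C2 * (Mf m q : ℝ) := by field_simp
          _ ≤ C2 * (Mf m N : ℝ) := mul_le_mul_of_nonneg_left hMq hC2
      · rw [if_neg hqN]
        have hqk : q ≤ k := (Finset.mem_Icc.mp hk).1
        rw [hvan1 (n-1) q k v (by omega) hqk, mul_zero]
    have hg2 : ∀ q ∈ Finset.range n, ∀ k ∈ Finset.Icc q (n-1), ∀ v ∈ Finset.Icc 1 (m q - 1),
        (Mf m q : ℝ) * (Mf m k : ℝ) ^ 2 *
            ∫ tu in (cyl m k (v • evec m q)) ×ˢ (cyl m k 0),
              ‖F (x - tu.1, y - tu.2) - F (x, y)‖ * ‖rr m (k + 1) (n - 1) tu.1 tu.2‖ ∂μ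
          ≤ if q < N then C2 * (Mf m N : ℝ) else 0 := by
      intro q hq k hk v hv
      by_cases hqN : q < N
      · rw [if_pos hqN]
        refine le_trans (mul_le_mul_of_nonneg_left (hI12 (n-1) k _ _) (by positivity)) ?_
        have hMk0 : (0:ℝ) < (Mf m k : ℝ) := by exact_mod_cast Mf_pos hm k
        have hMq : (Mf m q : ℝ) ≤ (Mf m N : ℝ) := by exact_mod_cast Mf_mono hm hqN.le
        calc (Mf m q : ℝ) * (Mf m k : ℝ) ^ 2 * (C2 * ((Mf m k : ℝ) * (Mf m k : ℝ))⁻¹)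
            = C2 * (Mf m q : ℝ) := by field_simp
          _ ≤ C2 * (Mf m N : ℝ) := mul_le_mul_of_nonneg_left hMq hC2
      · rw [if_neg hqN]
        have hqk : q ≤ k := (Finset.mem_Icc.mp hk).1
        rw [hvan2 (n-1) q k v (by omega) hqk, mul_zero]
    have hg3 : ∀ q ∈ Finset.range (n+1), ∀ i ∈ Finset.Icc q n, ∀ v ∈ Finset.Icc 1 (m q - 1),
        (Mf m q : ℝ) * (Mf m i : ℝ) *
            ∫ tu in (cyl m n 0) ×ˢ (cyl m i (v • evec m q)),
              ‖F (x - tu.1, y - tu.2) - F (x, y)‖ ∂μ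
          ≤ if q < N then C2 * ((Mf m N : ℝ) * (Mf m n : ℝ)⁻¹) else 0 := by
      intro q hq i hi v hv
      obtain ⟨hqi, hin⟩ := Finset.mem_Icc.mp hi
      by_cases hqN : q < N
      · rw [if_pos hqN]
        refine le_trans (mul_le_mul_of_nonneg_left (hI3 n i _ _ hin) (by positivity)) ?_
        have hMi0 : (0:ℝ) < (Mf m i : ℝ) := by exact_mod_cast Mf_pos hm i
        have hMq : (Mf m q : ℝ) ≤ (Mf m N : ℝ) := by exact_mod_cast Mf_mono hm hqN.le
        calc (Mf m q : ℝ) * (Mf m i : ℝ) * (C2 * ((Mf m n : ℝ) * (Mf m i : ℝ))⁻¹)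
            = C2 * ((Mf m q : ℝ) * (Mf m n : ℝ)⁻¹) := by field_simp
          _ ≤ C2 * ((Mf m N : ℝ) * (Mf m n : ℝ)⁻¹) := by
              refine mul_le_mul_of_nonneg_left ?_ hC2
              exact mul_le_mul_of_nonneg_right hMq (by positivity)
      · rw [if_neg hqN]
        rw [hvan3 n i q v (by omega) hn hqi, mul_zero]
    have hg4 : ∀ q ∈ Finset.range (n+1), ∀ i ∈ Finset.Icc q n, ∀ v ∈ Finset.Icc 1 (m q - 1),
        (Mf m q : ℝ) * (Mf m i : ℝ) *
            ∫ tu in (cyl m i (v • evec m q)) ×ˢ (cyl m n 0),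
              ‖F (x - tu.1, y - tu.2) - F (x, y)‖ ∂μ
          ≤ if q < N then C2 * ((Mf m N : ℝ) * (Mf m n : ℝ)⁻¹) else 0 := by
      intro q hq i hi v hv
      obtain ⟨hqi, hin⟩ := Finset.mem_Icc.mp hi
      by_cases hqN : q < N
      · rw [if_pos hqN]
        refine le_trans (mul_le_mul_of_nonneg_left (hI4 n i _ _ hin) (by positivity)) ?_
        have hMi0 : (0:ℝ) < (Mf m i : ℝ) := by exact_mod_cast Mf_pos hm i
        have hMq : (Mf m q : ℝ) ≤ (Mf m N : ℝ) := by exact_mod_cast Mf_mono hm hqN.le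
        calc (Mf m q : ℝ) * (Mf m i : ℝ) * (C2 * ((Mf m i : ℝ) * (Mf m n : ℝ))⁻¹)
            = C2 * ((Mf m q : ℝ) * (Mf m n : ℝ)⁻¹) := by field_simp
          _ ≤ C2 * ((Mf m N : ℝ) * (Mf m n : ℝ)⁻¹) := by
              refine mul_le_mul_of_nonneg_left ?_ hC2
              exact mul_le_mul_of_nonneg_right hMq (by positivity)
      · rw [if_neg hqN]
        rw [hvan4 n i q v (by omega) hn hqi, mul_zero]
    unfold Wml
    refine le_trans (add_le_add (add_le_add (add_le_add ?_ ?_) ?_) ?_)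
      (le_of_eq (show E + E + E + E = 4 * E by ring))
    · refine le_trans (mul_le_mul_of_nonneg_left
        (triple_sum_le (by positivity) hK1 hV1 hg1) (by positivity)) ?_
      refine le_trans (le_of_eq (by ring)) hEpre2
    · refine le_trans (mul_le_mul_of_nonneg_left
        (triple_sum_le (by positivity) hK1 hV1 hg2) (by positivity)) ?_
      refine le_trans (le_of_eq (by ring)) hEpre2
    · refine le_trans (triple_sum_le (by positivity) hK3 hV1 hg3) ?_
      refine le_trans (le_of_eq (by push_cast; ring)) hEpre
    · refine le_trans (triple_sum_le (by positivity) hK3 hV1 hg4) ?_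
      refine le_trans (le_of_eq (by push_cast; ring)) hEpre
  -- conclusion
  have hV0 : Tendsto (fun n : ℕ =>
      4 * ((N:ℝ) * (((n:ℝ) + 1) * ((B:ℝ) * (C2 * ((Mf m N : ℝ) * (1/2:ℝ)^n))))))
      atTop (nhds 0) := by
    have h2 := lim_aux.const_mul (4 * (N:ℝ) * (B:ℝ) * C2 * (Mf m N : ℝ))
    rw [mul_zero] at h2
    refine h2.congr fun n => by ring
  refine squeeze_zero' (Filter.Eventually.of_forall hW0)
    (Filter.eventually_atTop.mpr ⟨N, hWle⟩) hV0

end Aux17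

/-- Every point is a Marcinkiewicz–Lebesgue point of a Vilenkin polynomial:
for `P = ∑_{(i,j)∈s} c_{i,j} ψ_i ⊗ ψ_j` one has `W_n(x,y;P) → 0` everywhere. -/
theorem stmt17 (hm : ∀ k, 2 ≤ m k) (B : ℕ) (hB : ∀ k, m k ≤ B)
    (μ : Measure ((∀ j, ZMod (m j)) × (∀ j, ZMod (m j)))) [IsProbabilityMeasure μ]
    (hinv : ∀ (z : (∀ j, ZMod (m j)) × (∀ j, ZMod (m j)))
      (s : Set ((∀ j, ZMod (m j)) × (∀ j, ZMod (m j)))), μ ((fun w => z + w) ⁻¹' s) = μ s)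
    (hcyl : ∀ (k : ℕ) (z w : ∀ j, ZMod (m j)),
      μ ((cyl m k z) ×ˢ (cyl m k w)) = ((Mf m k : ℝ≥0∞) * (Mf m k : ℝ≥0∞))⁻¹)
    (s : Finset (ℕ × ℕ)) (c : ℕ × ℕ → ℂ) :
    ∀ x y : ∀ j, ZMod (m j),
      Tendsto
        (fun n => Wml m μ n
          (fun z => ∑ ij ∈ s, c ij * psi m ij.1 z.1 * psi m ij.2 z.2) x y)
        atTop (nhds 0) := by

  intro x y
  set N : ℕ := (s.sup fun ij => max ij.1 ij.2) + 1 with hN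
  have hFm : Measurable fun z : (∀ j, ZMod (m j)) × (∀ j, ZMod (m j)) =>
      ∑ ij ∈ s, c ij * psi m ij.1 z.1 * psi m ij.2 z.2 := by
    refine Finset.measurable_sum _ fun ij _ => ?_
    exact (((Aux17.measurable_psi ij.1).comp measurable_fst).const_mul (c ij)).mul
      ((Aux17.measurable_psi ij.2).comp measurable_snd)
  have hbd : ∀ u : (∀ j, ZMod (m j)) × (∀ j, ZMod (m j)),
      ‖∑ ij ∈ s, c ij * psi m ij.1 u.1 * psi m ij.2 u.2‖ ≤ ∑ ij ∈ s, ‖c ij‖ := by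
    intro u
    refine le_trans (norm_sum_le _ _) (le_of_eq (Finset.sum_congr rfl fun ij _ => ?_))
    rw [norm_mul, norm_mul, Aux17.norm_psi, Aux17.norm_psi, mul_one, mul_one]
  have hFb : ∀ z w : (∀ j, ZMod (m j)) × (∀ j, ZMod (m j)),
      ‖(∑ ij ∈ s, c ij * psi m ij.1 z.1 * psi m ij.2 z.2)
        - ∑ ij ∈ s, c ij * psi m ij.1 w.1 * psi m ij.2 w.2‖ ≤ 2 * ∑ ij ∈ s, ‖c ij‖ := by
    intro z w
    refine le_trans (norm_sub_le _ _) ?_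
    have := hbd z
    have := hbd w
    linarith
  have hFdep : ∀ z w : (∀ j, ZMod (m j)) × (∀ j, ZMod (m j)),
      (∀ j, j < N → z.1 j = w.1 j) → (∀ j, j < N → z.2 j = w.2 j) →
      (∑ ij ∈ s, c ij * psi m ij.1 z.1 * psi m ij.2 z.2)
        = ∑ ij ∈ s, c ij * psi m ij.1 w.1 * psi m ij.2 w.2 := by
    intro z w h1 h2
    refine Finset.sum_congr rfl fun ij hij => ?_
    have hle : max ij.1 ij.2 ≤ s.sup fun ij => max ij.1 ij.2 :=
      Finset.le_sup (f := fun ij : ℕ × ℕ => max ij.1 ij.2) hij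
    have hm1 : ij.1 ≤ max ij.1 ij.2 := le_max_left _ _
    have hm2 : ij.2 ≤ max ij.1 ij.2 := le_max_right _ _
    rw [show psi m ij.1 z.1 = psi m ij.1 w.1 from
        Aux17.psi_congr (fun j hj => h1 j (by omega)),
      show psi m ij.2 z.2 = psi m ij.2 w.2 from
        Aux17.psi_congr (fun j hj => h2 j (by omega))]
  exact Aux17.main_aux hm B hB μ hcyl _ N (by omega) (2 * ∑ ij ∈ s, ‖c ij‖)
    (by positivity) hFm hFb hFdep x y
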